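/- Let R and S be strings as in the context, and let ip denote the insert-point function of S with respect to R. For positions 1 ≤ i, j ≤ |S|: if ip(i) < ip(j), then the suffix S[i..] is lexicographically smaller than the suffix S[j..]. -/

import Mathlib

section GAux
variable {α : Type*} [LinearOrder α]

private lemma G_prefix_lex {X Y : List α} (h : X <+: Y) (hne : X ≠ Y) : List.Lex (·<·) X Y := by
  induction X generalizing Y with
  | nil =>
    cases Y with
    | nil => exact absurd rfl hne
    | cons y Y' => exact List.Lex.nil
  | cons x X' IH =>
    cases Y with
    | nil => exact absurd (List.prefix_nil.mp h) (by simp)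
    | cons y Y' =>
      obtain ⟨rfl, h'⟩ := List.cons_prefix_cons.mp h
      exact List.Lex.cons (IH h' (fun e => hne (by rw [e])))

private lemma G_mismatch_lex {X Y : List α} {p : ℕ} (ht : X.take p = Y.take p)
    (h1 : p < X.length) (h2 : p < Y.length) (hab : X[p] < Y[p]) : List.Lex (·<·) X Y := by
  induction p generalizing X Y with
  | zero =>
    cases X with
    | nil => simp at h1
    | cons x X' =>
      cases Y with
      | nil => simp at h2
      | cons y Y' => exact List.Lex.rel (by simpa using hab)
  | succ q IH =>
    cases X with
    | nil => simp at h1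
    | cons x X' =>
      cases Y with
      | nil => simp at h2
      | cons y Y' =>
        simp only [List.take_succ_cons, List.cons.injEq] at ht
        obtain ⟨rfl, ht'⟩ := ht
        exact List.Lex.cons (IH ht' (by simpa using h1) (by simpa using h2) (by simpa using hab))

private lemma G_lex_cases {X Y : List α} (h : List.Lex (·<·) X Y) :
    (X <+: Y ∧ X ≠ Y) ∨ ∃ p, ∃ (_ : p < X.length) (_ : p < Y.length),
      X.take p = Y.take p ∧ X[p] < Y[p] := by
  induction h with
  | nil => exact Or.inl ⟨List.nil_prefix, by simp⟩
  | @rel a l₁ b l₂ hr => exact Or.inr ⟨0, by simp, by simp, by simp, by simpa⟩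
  | @cons a l₁ l₂ hl IH =>
    rcases IH with ⟨hp, hne⟩ | ⟨p, h1, h2, ht, hab⟩
    · exact Or.inl ⟨List.cons_prefix_cons.mpr ⟨rfl, hp⟩, by simpa using hne⟩
    · exact Or.inr ⟨p+1, by simpa using h1, by simpa using h2, by simp [ht], by simpa using hab⟩

private lemma G_lex_append_left {X Y Z : List α} (h : List.Lex (·<·) X Y) (hnp : ¬ X <+: Y) :
    List.Lex (·<·) (X ++ Z) Y := by
  rcases G_lex_cases h with ⟨hp, _⟩ | ⟨p, h1, h2, ht, hab⟩
  · exact absurd hp hnp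
  · exact G_mismatch_lex (by rw [List.take_append_of_le_length (le_of_lt h1), ht])
      (by simp; omega) h2 (by rw [List.getElem_append_left h1]; exact hab)

private lemma G_not_lex_singleton {Z : List α} {h0 : α} (hZ : Z ≠ [])
    (hmin : ∀ z ∈ Z, ¬ z < h0) : ¬ List.Lex (·<·) Z [h0] := by
  intro h
  cases h with
  | nil => exact hZ rfl
  | cons h' => exact List.not_lex_nil h'
  | rel hr => exact hmin _ (by simp) hr

omit [LinearOrder α] in
private lemma G_drop_last {l : List α} {a : α} (h : l[l.length - 1]? = some a) :
    l.drop (l.length - 1) = [a] := by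
  obtain ⟨hlt, hget⟩ := List.getElem?_eq_some_iff.mp h
  have h1 : (l.drop (l.length - 1)).length = 1 := by rw [List.length_drop]; omega
  obtain ⟨b, hb⟩ := List.length_eq_one_iff.mp h1
  have h2 : (l.drop (l.length - 1))[0]'(by omega) = b := by simp [hb]
  rw [List.getElem_drop] at h2
  simp only [Nat.add_zero] at h2
  rw [hb, ← hget, ← h2]

private theorem G_key
    (R S : List α) (hash dollar : α)
    (SA : ℕ → ℕ) (ℓ : ℕ → ℕ) (c : ℕ → α) (ip : ℕ → ℕ)
    (hRne : R ≠ [])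
    (hRlast : R[R.length - 1]? = some hash)
    (hRhash : ∀ m, R[m]? = some hash → m = R.length - 1)
    (hSlast : S[S.length - 1]? = some dollar)
    (hSdollar : ∀ m, S[m]? = some dollar → m = S.length - 1)
    (hhashmin : ∀ a, (a ∈ R ∨ a ∈ S) → a ≠ hash → hash < a)
    (hdollarmin : ∀ a, (a ∈ R ∨ a ∈ S) → a ≠ hash → a ≠ dollar → dollar < a)
    (hSinR : ∀ a ∈ S, a ≠ dollar → a ∈ R)
    (hdnotR : dollar ∉ R)
    (hSAran : ∀ k < R.length, SA k < R.length)
    (hSAmono : ∀ k₁ k₂, k₁ < k₂ → k₂ < R.length →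
      List.Lex (· < ·) (R.drop (SA k₁)) (R.drop (SA k₂)))
    (hUocc : ∀ i < S.length, (S.drop i).take (ℓ i) <:+: R)
    (hUmax : ∀ i < S.length, ∀ m, m ≤ S.length - i → (S.drop i).take m <:+: R → m ≤ ℓ i)
    (hc : ∀ i < S.length, S[i + ℓ i]? = some (c i))
    (hip0 : ∀ i < S.length, ℓ i = 0 → ip i = 0)
    (hipmax : ∀ i < S.length, 0 < ℓ i →
      {k | k < R.length ∧ (S.drop i).take (ℓ i) <+: R.drop (SA k) ∧
        List.Lex (· < ·) (R.drop (SA k)) ((S.drop i).take (ℓ i) ++ [c i])}.Nonempty →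
      IsGreatest {k | k < R.length ∧ (S.drop i).take (ℓ i) <+: R.drop (SA k) ∧
        List.Lex (· < ·) (R.drop (SA k)) ((S.drop i).take (ℓ i) ++ [c i])} (ip i))
    (hipmin : ∀ i < S.length, 0 < ℓ i →
      ¬ {k | k < R.length ∧ (S.drop i).take (ℓ i) <+: R.drop (SA k) ∧
        List.Lex (· < ·) (R.drop (SA k)) ((S.drop i).take (ℓ i) ++ [c i])}.Nonempty →
      IsLeast {k | k < R.length ∧ (S.drop i).take (ℓ i) <+: R.drop (SA k)} (ip i))
    (i j : ℕ) (hi : i < S.length) (hj : j < S.length)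
    (hLex : List.Lex (· < ·) (S.drop i) (S.drop j))
    (hip : ip j < ip i) : False := by
  classical
  have hR0 : 0 < R.length := List.length_pos_iff.mpr hRne
  obtain ⟨hci_lt, hci⟩ := List.getElem?_eq_some_iff.mp (hc i hi)
  obtain ⟨hcj_lt, hcj⟩ := List.getElem?_eq_some_iff.mp (hc j hj)
  -- W identities
  have hWi_eq : (S.drop i).take (ℓ i) ++ [c i] = (S.drop i).take (ℓ i + 1) := by
    rw [List.take_succ, List.getElem?_drop, hc i hi]; rfl
  have hWj_eq : (S.drop j).take (ℓ j) ++ [c j] = (S.drop j).take (ℓ j + 1) := by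
    rw [List.take_succ, List.getElem?_drop, hc j hj]; rfl
  have hWi_ninf : ¬ ((S.drop i).take (ℓ i) ++ [c i]) <:+: R := by
    intro hinf
    rw [hWi_eq] at hinf
    have := hUmax i hi (ℓ i + 1) (by omega) hinf
    omega
  have hWj_ninf : ¬ ((S.drop j).take (ℓ j) ++ [c j]) <:+: R := by
    intro hinf
    rw [hWj_eq] at hinf
    have := hUmax j hj (ℓ j + 1) (by omega) hinf
    omega
  -- ℓ i cannot be 0
  rcases Nat.eq_zero_or_pos (ℓ i) with hℓi0 | hℓi
  · rw [hip0 i hi hℓi0] at hip; omega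
  -- structure at i
  have hidat : ip i < R.length ∧ (S.drop i).take (ℓ i) <+: R.drop (SA (ip i)) := by
    by_cases hne : ({k | k < R.length ∧ (S.drop i).take (ℓ i) <+: R.drop (SA k) ∧
        List.Lex (· < ·) (R.drop (SA k)) ((S.drop i).take (ℓ i) ++ [c i])} : Set ℕ).Nonempty
    · obtain ⟨h1, h2, _⟩ := (hipmax i hi hℓi hne).1; exact ⟨h1, h2⟩
    · obtain ⟨h1, h2⟩ := (hipmin i hi hℓi hne).1; exact ⟨h1, h2⟩
  obtain ⟨hipiR, hUiY⟩ := hidat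
  have hYlen : SA (ip i) < R.length := hSAran _ hipiR
  have hYne : R.drop (SA (ip i)) ≠ [] := by
    intro he
    have := congrArg List.length he
    rw [List.length_drop] at this
    simp at this
    omega
  -- the key comparison: S.drop j < R.drop (SA (ip i))
  have hBj : List.Lex (·<·) (S.drop j) (R.drop (SA (ip i))) := by
    rcases Nat.eq_zero_or_pos (ℓ j) with hℓj0 | hℓj
    · -- ℓ j = 0 : j is the last position
      have hSj : S[j] = dollar := by
        by_contra hne
        have hmem : S[j] ∈ R := hSinR _ (List.getElem_mem hj) hne
        obtain ⟨s, t, hst⟩ := List.append_of_mem hmem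
        have h1 : (S.drop j).take 1 = [S[j]] := by
          rw [List.take_succ, List.getElem?_drop, Nat.add_zero]
          simp [List.getElem?_eq_getElem hj]
        have hinf : (S.drop j).take 1 <:+: R := by
          rw [h1]; exact ⟨s, t, by rw [hst]; simp⟩
        have := hUmax j hj 1 (by omega) hinf
        omega
      have hjl : j = S.length - 1 := hSdollar j (List.getElem?_eq_some_iff.mpr ⟨hj, hSj⟩)
      have hSdropj : S.drop j = [dollar] := by rw [hjl]; exact G_drop_last hSlast
      rw [hSdropj]
      by_cases hyh : R[SA (ip i)] = hash
      · -- R.drop (SA (ip i)) = [hash]; impossible since ip i ≥ 1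
        exfalso
        have h1 : SA (ip i) = R.length - 1 :=
          hRhash _ (List.getElem?_eq_some_iff.mpr ⟨hYlen, hyh⟩)
        have hYhash : R.drop (SA (ip i)) = [hash] := by rw [h1]; exact G_drop_last hRlast
        have hmono := hSAmono 0 (ip i) (by omega) hipiR
        rw [hYhash] at hmono
        have hne0 : R.drop (SA 0) ≠ [] := by
          intro he
          have hr := hSAran 0 hR0
          have h9 := congrArg List.length he
          rw [List.length_drop] at h9
          simp at h9
          omega
        refine G_not_lex_singleton hne0 ?_ hmono
        intro z hz hzlt
        rcases eq_or_ne z hash with rfl | hzne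
        · exact lt_irrefl _ hzlt
        · exact lt_asymm (hhashmin z (Or.inl (List.drop_subset _ _ hz)) hzne) hzlt
      · obtain ⟨z, Z, hzZ⟩ := List.exists_cons_of_ne_nil hYne
        have hz : R[SA (ip i)] = z := by
          have h0 : (R.drop (SA (ip i)))[0]'(by rw [hzZ]; simp) = z := by simp [hzZ]
          rw [List.getElem_drop] at h0
          simpa using h0
        have hyR : R[SA (ip i)] ∈ R := List.getElem_mem hYlen
        have hyd : R[SA (ip i)] ≠ dollar := fun e => hdnotR (e ▸ hyR)
        have hdy : dollar < z := hz ▸ hdollarmin _ (Or.inl hyR) hyh hyd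
        rw [hzZ]
        exact List.Lex.rel hdy
    · -- ℓ j > 0
      have hjdat : ip j < R.length ∧ (S.drop j).take (ℓ j) <+: R.drop (SA (ip j)) := by
        by_cases hne : ({k | k < R.length ∧ (S.drop j).take (ℓ j) <+: R.drop (SA k) ∧
            List.Lex (· < ·) (R.drop (SA k)) ((S.drop j).take (ℓ j) ++ [c j])} : Set ℕ).Nonempty
        · obtain ⟨h1, h2, _⟩ := (hipmax j hj hℓj hne).1; exact ⟨h1, h2⟩
        · obtain ⟨h1, h2⟩ := (hipmin j hj hℓj hne).1; exact ⟨h1, h2⟩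
      have hYnot : ¬ ((S.drop j).take (ℓ j) <+: R.drop (SA (ip i)) ∧
          List.Lex (·<·) (R.drop (SA (ip i))) ((S.drop j).take (ℓ j) ++ [c j])) := by
        by_cases hne : ({k | k < R.length ∧ (S.drop j).take (ℓ j) <+: R.drop (SA k) ∧
            List.Lex (· < ·) (R.drop (SA k)) ((S.drop j).take (ℓ j) ++ [c j])} : Set ℕ).Nonempty
        · rintro ⟨h1, h2⟩
          have := (hipmax j hj hℓj hne).2 ⟨hipiR, h1, h2⟩
          omega
        · rintro ⟨h1, h2⟩
          exact hne ⟨ip i, hipiR, h1, h2⟩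
      by_cases hpre : (S.drop j).take (ℓ j) <+: R.drop (SA (ip i))
      · have h3 : ¬ List.Lex (·<·) (R.drop (SA (ip i))) ((S.drop j).take (ℓ j) ++ [c j]) :=
          fun h => hYnot ⟨hpre, h⟩
        rcases trichotomous_of (List.Lex (·<·)) (R.drop (SA (ip i)))
            ((S.drop j).take (ℓ j) ++ [c j]) with h4 | h4 | h4
        · exact absurd h4 h3
        · exact absurd (h4 ▸ (List.drop_suffix _ _).isInfix) hWj_ninf
        · have hnp : ¬ ((S.drop j).take (ℓ j) ++ [c j]) <+: R.drop (SA (ip i)) := fun hp =>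
            hWj_ninf (hp.isInfix.trans (List.drop_suffix _ _).isInfix)
          have h5 := G_lex_append_left (Z := (S.drop j).drop (ℓ j + 1)) h4 hnp
          have h6 : ((S.drop j).take (ℓ j) ++ [c j]) ++ (S.drop j).drop (ℓ j + 1) = S.drop j := by
            rw [hWj_eq, List.take_append_drop]
          rwa [h6] at h5
      · obtain ⟨hipjR, hUjX⟩ := hjdat
        have hXY : List.Lex (·<·) (R.drop (SA (ip j))) (R.drop (SA (ip i))) :=
          hSAmono _ _ hip hipiR
        have hUjY : List.Lex (·<·) ((S.drop j).take (ℓ j)) (R.drop (SA (ip i))) := by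
          rcases eq_or_ne ((S.drop j).take (ℓ j)) (R.drop (SA (ip j))) with he | he
          · rw [he]; exact hXY
          · exact List.lex_trans (fun h1 h2 => lt_trans h1 h2) (G_prefix_lex hUjX he) hXY
        have h5 := G_lex_append_left (Z := (S.drop j).drop (ℓ j)) hUjY hpre
        rwa [List.take_append_drop] at h5
  -- now case on the structure at i
  by_cases hnei : ({k | k < R.length ∧ (S.drop i).take (ℓ i) <+: R.drop (SA k) ∧
      List.Lex (· < ·) (R.drop (SA k)) ((S.drop i).take (ℓ i) ++ [c i])} : Set ℕ).Nonempty
  · -- nonempty case: R.drop (SA (ip i)) < S.drop i < S.drop j < R.drop (SA (ip i))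
    obtain ⟨_, _, hYW⟩ := (hipmax i hi hℓi hnei).1
    have h1 : List.Lex (·<·) (R.drop (SA (ip i))) (S.drop i) := by
      have h5 := List.Lex.append_right (·<·) ((S.drop i).drop (ℓ i + 1)) hYW
      have h6 : ((S.drop i).take (ℓ i) ++ [c i]) ++ (S.drop i).drop (ℓ i + 1) = S.drop i := by
        rw [hWi_eq, List.take_append_drop]
      rwa [h6] at h5
    exact asymm_of (List.Lex (·<·)) (List.lex_trans (fun h1 h2 => lt_trans h1 h2) h1 hLex) hBj
  · -- empty case
    have hleast := hipmin i hi hℓi hnei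
    have hij : i ≠ j := by intro e; rw [e] at hip; omega
    -- extract the mismatch position of S.drop i vs S.drop j
    obtain ⟨p, hp1, hp2, htake, hab⟩ :
        ∃ p, ∃ (_ : p < (S.drop i).length) (_ : p < (S.drop j).length),
          (S.drop i).take p = (S.drop j).take p ∧
          (S.drop i)[p] < (S.drop j)[p] := by
      rcases G_lex_cases hLex with ⟨hp, hne⟩ | h
      · exfalso
        have hlen : (S.drop i).length < (S.drop j).length :=
          lt_of_le_of_ne hp.length_le (fun e => hne (hp.eq_of_length e))
        rw [List.length_drop, List.length_drop] at hlen
        have hji : j < i := by omega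
        have hql : S.length - i - 1 < (S.drop i).length := by rw [List.length_drop]; omega
        have h1 : (S.drop i)[S.length - i - 1] =
            (S.drop j)[S.length - i - 1]'(by rw [List.length_drop]; omega) :=
          hp.getElem hql
        rw [List.getElem_drop, List.getElem_drop] at h1
        have h2 : S[i + (S.length - i - 1)]? = some dollar := by
          rw [show i + (S.length - i - 1) = S.length - 1 by omega]
          exact hSlast
        have h3 : S[j + (S.length - i - 1)]? = some dollar := by
          rw [List.getElem?_eq_some_iff]
          exact ⟨by omega, by rw [← h1]; exact (List.getElem?_eq_some_iff.mp h2).2⟩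
        have := hSdollar _ h3
        omega
      · exact h
    -- the mismatch is within both U i and U j
    have hiotj : ¬ (ℓ i < p ∧ ℓ i < ℓ j) := by
      rintro ⟨h1, h2⟩
      apply hWi_ninf
      rw [hWi_eq]
      have e1 : (S.drop i).take (ℓ i + 1) = (S.drop j).take (ℓ i + 1) := by
        have e0 := congrArg (List.take (ℓ i + 1)) htake
        rwa [List.take_take, List.take_take, min_eq_left (by omega)] at e0
      have e2 : (S.drop j).take (ℓ i + 1) = ((S.drop j).take (ℓ j)).take (ℓ i + 1) := by
        rw [List.take_take, min_eq_left (by omega)]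
      rw [e1, e2]
      exact (List.take_prefix _ _).isInfix.trans (hUocc j hj)
    have hjoti : ¬ (ℓ j < p ∧ ℓ j < ℓ i) := by
      rintro ⟨h1, h2⟩
      apply hWj_ninf
      rw [hWj_eq]
      have e1 : (S.drop j).take (ℓ j + 1) = (S.drop i).take (ℓ j + 1) := by
        have e0 := congrArg (List.take (ℓ j + 1)) htake.symm
        rwa [List.take_take, List.take_take, min_eq_left (by omega)] at e0
      have e2 : (S.drop i).take (ℓ j + 1) = ((S.drop i).take (ℓ i)).take (ℓ j + 1) := by
        rw [List.take_take, min_eq_left (by omega)]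
      rw [e1, e2]
      exact (List.take_prefix _ _).isInfix.trans (hUocc i hi)
    have heqcase : ¬ (ℓ i = ℓ j ∧ ℓ i < p ∧ ℓ j < p) := by
      rintro ⟨h3, h1, h2⟩
      have hUeq : (S.drop i).take (ℓ i) = (S.drop j).take (ℓ j) := by
        have e0 := congrArg (List.take (ℓ i)) htake
        rw [List.take_take, List.take_take, min_eq_left (by omega)] at e0
        rw [e0, h3]
      have hceq : c i = c j := by
        have e0 := congrArg (fun l => l[ℓ i]?) htake
        simp only [List.getElem?_take, if_pos h1] at e0
        rw [List.getElem?_drop, List.getElem?_drop, hc i hi] at e0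
        rw [show j + ℓ i = j + ℓ j by omega, hc j hj] at e0
        exact Option.some.inj e0
      have hℓj : 0 < ℓ j := by omega
      by_cases hne2 : ({k | k < R.length ∧ (S.drop j).take (ℓ j) <+: R.drop (SA k) ∧
          List.Lex (· < ·) (R.drop (SA k)) ((S.drop j).take (ℓ j) ++ [c j])} : Set ℕ).Nonempty
      · apply hnei
        rw [hUeq, hceq]
        exact hne2
      · have hleastj := hipmin j hj hℓj hne2
        have : ip i = ip j := by
          have e1 : {k | k < R.length ∧ (S.drop i).take (ℓ i) <+: R.drop (SA k)} =
              {k | k < R.length ∧ (S.drop j).take (ℓ j) <+: R.drop (SA k)} := by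
            rw [hUeq]
          rw [e1] at hleast
          exact hleast.unique hleastj
        omega
    have hF4 : p ≤ ℓ i ∧ p ≤ ℓ j := by
      by_contra hcon
      apply heqcase
      omega
    obtain ⟨hpi, hpj⟩ := hF4
    rcases lt_or_eq_of_le hpi with hplt | hpeq
    · -- p < ℓ i : then R.drop (SA (ip i)) < S.drop j, contradicting hBj
      have hUilen : ((S.drop i).take (ℓ i)).length = ℓ i := by
        rw [List.length_take, List.length_drop]
        omega
      have hYlen2 : p < (R.drop (SA (ip i))).length :=
        lt_of_lt_of_le (by omega : p < ((S.drop i).take (ℓ i)).length) hUiY.length_le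
      have hYp : (R.drop (SA (ip i)))[p]'hYlen2 = (S.drop i)[p] := by
        have e0 := hUiY.getElem (i := p) (by omega)
        rw [List.getElem_take] at e0
        exact e0.symm
      have hYtake : (R.drop (SA (ip i))).take p = (S.drop j).take p := by
        obtain ⟨t, ht⟩ := hUiY
        rw [← ht, List.take_append_of_le_length (by omega), List.take_take,
          min_eq_left (by omega), htake]
      have hlex2 : List.Lex (·<·) (R.drop (SA (ip i))) (S.drop j) :=
        G_mismatch_lex hYtake hYlen2 hp2 (by rw [hYp]; exact hab)
      exact asymm_of (List.Lex (·<·)) hlex2 hBj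
    · -- p = ℓ i : U i is a prefix of R.drop (SA (ip j)), contradicting minimality
      have hℓj : 0 < ℓ j := by omega
      have hjdat2 : ip j < R.length ∧ (S.drop j).take (ℓ j) <+: R.drop (SA (ip j)) := by
        by_cases hne2 : ({k | k < R.length ∧ (S.drop j).take (ℓ j) <+: R.drop (SA k) ∧
            List.Lex (· < ·) (R.drop (SA k)) ((S.drop j).take (ℓ j) ++ [c j])} : Set ℕ).Nonempty
        · obtain ⟨h1, h2, _⟩ := (hipmax j hj hℓj hne2).1; exact ⟨h1, h2⟩
        · obtain ⟨h1, h2⟩ := (hipmin j hj hℓj hne2).1; exact ⟨h1, h2⟩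
      have hUiUj : (S.drop i).take (ℓ i) <+: (S.drop j).take (ℓ j) := by
        have e1 : (S.drop i).take (ℓ i) = ((S.drop j).take (ℓ j)).take p := by
          rw [← hpeq, List.take_take, min_eq_left hpj, htake]
        rw [e1]
        exact List.take_prefix _ _
      have : ip i ≤ ip j := hleast.2 ⟨hjdat2.1, hUiUj.trans hjdat2.2⟩
      omega

end GAux


/-- if `ip i < ip j` then the suffix `S.drop i` is lexicographically smaller than `S.drop j`. -/
theorem insert_point_lt_implies_suffix_lt {α : Type*} [LinearOrder α]
    (R S : List α) (hash dollar : α)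
    (SA : ℕ → ℕ) (ℓ : ℕ → ℕ) (c : ℕ → α) (ip : ℕ → ℕ)
    -- sentinel/context hypotheses
    (hRne : R ≠ []) (hSne : S ≠ [])
    (hRlast : R[R.length - 1]? = some hash)
    (hRhash : ∀ m, R[m]? = some hash → m = R.length - 1)
    (hSlast : S[S.length - 1]? = some dollar)
    (hSdollar : ∀ m, S[m]? = some dollar → m = S.length - 1)
    (hhd : hash < dollar)
    (hhashmin : ∀ a, (a ∈ R ∨ a ∈ S) → a ≠ hash → hash < a)
    (hdollarmin : ∀ a, (a ∈ R ∨ a ∈ S) → a ≠ hash → a ≠ dollar → dollar < a)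
    (hSinR : ∀ a ∈ S, a ≠ dollar → a ∈ R)
    (hdnotR : dollar ∉ R)
    -- suffix array of R (0-based ranks and positions)
    (hSAran : ∀ k < R.length, SA k < R.length)
    (hSAsurj : ∀ m < R.length, ∃ k < R.length, SA k = m)
    (hSAmono : ∀ k₁ k₂, k₁ < k₂ → k₂ < R.length →
      List.Lex (· < ·) (R.drop (SA k₁)) (R.drop (SA k₂)))
    -- matching statistics: U i = (S.drop i).take (ℓ i) is the longest prefix of the
    -- suffix S.drop i occurring as a substring of R; c i = S[i + ℓ i] is the mismatch character
    (hUlen : ∀ i < S.length, ℓ i ≤ S.length - i)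
    (hUocc : ∀ i < S.length, (S.drop i).take (ℓ i) <:+: R)
    (hUmax : ∀ i < S.length, ∀ m, m ≤ S.length - i → (S.drop i).take m <:+: R → m ≤ ℓ i)
    (hc : ∀ i < S.length, S[i + ℓ i]? = some (c i))
    -- insert point
    (hip0 : ∀ i < S.length, ℓ i = 0 → ip i = 0)
    (hipmax : ∀ i < S.length, 0 < ℓ i →
      {k | k < R.length ∧ (S.drop i).take (ℓ i) <+: R.drop (SA k) ∧
        List.Lex (· < ·) (R.drop (SA k)) ((S.drop i).take (ℓ i) ++ [c i])}.Nonempty →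
      IsGreatest {k | k < R.length ∧ (S.drop i).take (ℓ i) <+: R.drop (SA k) ∧
        List.Lex (· < ·) (R.drop (SA k)) ((S.drop i).take (ℓ i) ++ [c i])} (ip i))
    (hipmin : ∀ i < S.length, 0 < ℓ i →
      ¬ {k | k < R.length ∧ (S.drop i).take (ℓ i) <+: R.drop (SA k) ∧
        List.Lex (· < ·) (R.drop (SA k)) ((S.drop i).take (ℓ i) ++ [c i])}.Nonempty →
      IsLeast {k | k < R.length ∧ (S.drop i).take (ℓ i) <+: R.drop (SA k)} (ip i))
    (i j : ℕ) (hi : i < S.length) (hj : j < S.length)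
    (hlt : ip i < ip j) :
    List.Lex (· < ·) (S.drop i) (S.drop j) := by
  rcases trichotomous_of (List.Lex (· < ·) : List α → List α → Prop) (S.drop i) (S.drop j) with h | h | h
  · exact h
  · exfalso
    have hij : i ≠ j := by intro e; rw [e] at hlt; omega
    have hl : (S.drop i).length = (S.drop j).length := by rw [h]
    rw [List.length_drop, List.length_drop] at hl
    omega
  · exact absurd (G_key R S hash dollar SA ℓ c ip hRne hRlast hRhash hSlast hSdollar
      hhashmin hdollarmin hSinR hdnotR hSAran hSAmono hUocc hUmax hc hip0 hipmax hipmin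
      j i hj hi h hlt) not_false
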